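/- Let A be a commutative Banach algebra and let B be an abstract Segal algebra with respect to A possessing an approximate identity (e_α). Let φ: B → B be a continuous algebra homomorphism admitting a continuous extension φ̃: A → A. If A is (φ̃,φ̃)-weakly amenable, then B is (φ,φ)-weakly amenable; in fact every continuous (φ,φ)-derivation D: B → B* is zero. -/

import Mathlib

/-!
STATEMENT 10.  Let `A` be a commutative Banach algebra and `B` an abstract Segal algebra
with respect to `A` possessing an approximate identity `(e_α)`.  We model `B` as a Banach
space equipped with a continuous bilinear associative product `mulB` (continuity of a
bilinear map gives the constant `C` with `‖ab‖' ≤ C‖a‖'‖b‖'`) together with a continuous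
injective multiplicative linear embedding `j : B → A` (continuity gives the constant `M`
with `‖b‖ ≤ M‖b‖'`) whose range is a dense left ideal of `A`.
Let `φ : B → B` be a continuous algebra homomorphism admitting a continuous extension
`φ̃ : A → A` (an algebra homomorphism with `φ̃ ∘ j = j ∘ φ`).  If `A` is
`(φ̃,φ̃)`-weakly amenable then `B` is `(φ,φ)`-weakly amenable; in fact every continuous
`(φ,φ)`-derivation `D : B → (B_{(φ,φ)})* = B*` is zero.
-/
set_option maxHeartbeats 2000000 in
theorem stmt10
    {A : Type*} [NormedCommRing A] [NormedAlgebra ℂ A] [CompleteSpace A]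
    {B : Type*} [NormedAddCommGroup B] [NormedSpace ℂ B] [CompleteSpace B]
    -- the (continuous, associative) product of the Banach algebra `B`
    (mulB : B →L[ℂ] B →L[ℂ] B)
    (hassoc : ∀ a b c : B, mulB (mulB a b) c = mulB a (mulB b c))
    -- `B` is (identified via `j` with) a dense left ideal of `A`
    (j : B →L[ℂ] A)
    (hjinj : Function.Injective j)
    (hjmul : ∀ a b : B, j (mulB a b) = j a * j b)
    (hjdense : DenseRange j)
    (hjideal : ∀ (a : A) (b : B), ∃ c : B, j c = a * j b)
    -- `B` has an approximate identity `(e_α)`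
    (κ : Type*) (F : Filter κ) (hF : F.NeBot) (e : κ → B)
    (hae : ∀ b : B, Filter.Tendsto (fun α => mulB (e α) b) F (nhds b))
    -- `φ` is a continuous algebra homomorphism on `B` with continuous extension `φ̃` on `A`
    (φ : B →L[ℂ] B)
    (hφ : ∀ a b : B, φ (mulB a b) = mulB (φ a) (φ b))
    (φt : A →L[ℂ] A)
    (hφt : ∀ a b : A, φt (a * b) = φt a * φt b)
    (hext : ∀ b : B, φt (j b) = j (φ b))
    -- `A` is `(φ̃,φ̃)`-weakly amenable
    (hWA : ∀ d : A →L[ℂ] A →L[ℂ] ℂ,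
      (∀ a b x : A, d (a * b) x = d a (φt b * x) + d b (x * φt a)) →
      ∃ ξ : A →L[ℂ] ℂ, ∀ a x : A, d a x = ξ (φt a * x) - ξ (x * φt a)) :
    -- then `B` is `(φ,φ)`-weakly amenable: in fact every continuous
    -- `(φ,φ)`-derivation `D : B → B*` is zero (hence in particular inner)
    ∀ D : B →L[ℂ] B →L[ℂ] ℂ,
      (∀ a b x : B, D (mulB a b) x = D a (mulB (φ b) x) + D b (mulB x (φ a))) →
      (∃ ξ : B →L[ℂ] ℂ, ∀ a x : B, D a x = ξ (mulB (φ a) x) - ξ (mulB x (φ a))) ∧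
      D = 0 := by
  intro D hD
  have hcomm : ∀ x y : B, mulB x y = mulB y x := fun x y =>
    hjinj (by rw [hjmul, hjmul, mul_comm])
  have hswap : ∀ x y z : B, mulB x (mulB y z) = mulB y (mulB x z) := fun x y z => by
    rw [← hassoc, hcomm x y, hassoc]
  choose σ hσ using hjideal
  -- the module action of `A` on `B`, as a continuous bilinear map
  have hTa : ∀ a : A, ∃ T : B →L[ℂ] B, ∀ x, j (T x) = a * j x := by
    intro a
    let T : B →ₗ[ℂ] B :=
      { toFun := σ a
        map_add' := fun x y => hjinj (by rw [hσ, map_add, map_add, hσ, hσ, mul_add])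
        map_smul' := fun c x => hjinj (by
          rw [hσ, map_smul, RingHom.id_apply, map_smul, hσ, mul_smul_comm]) }
    have cont : Continuous T := by
      apply T.continuous_of_seq_closed_graph
      intro u x y hu hTy
      apply hjinj
      have h1 : Filter.Tendsto (fun n => j (σ a (u n))) Filter.atTop (nhds (j y)) :=
        (j.continuous.tendsto y).comp hTy
      have h2 : Filter.Tendsto (fun n => a * j (u n)) Filter.atTop (nhds (a * j x)) :=
        Filter.Tendsto.mul tendsto_const_nhds ((j.continuous.tendsto x).comp hu)
      rw [show (fun n => j (σ a (u n))) = fun n => a * j (u n) from funext fun n => hσ a (u n)]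
        at h1
      show j y = j (σ a x)
      rw [hσ]
      exact tendsto_nhds_unique h1 h2
    exact ⟨⟨T, cont⟩, fun x => hσ a x⟩
  choose T hT using hTa
  obtain ⟨s, hs⟩ : ∃ s : A →L[ℂ] B →L[ℂ] B, ∀ a x, j (s a x) = a * j x := by
    let L : A →ₗ[ℂ] (B →L[ℂ] B) :=
      { toFun := T
        map_add' := fun p q => ContinuousLinearMap.ext fun x => hjinj (by
          rw [hT, ContinuousLinearMap.add_apply, map_add, hT, hT, add_mul])
        map_smul' := fun c p => ContinuousLinearMap.ext fun x => hjinj (by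
          rw [hT, RingHom.id_apply, ContinuousLinearMap.smul_apply, map_smul, hT,
            smul_mul_assoc]) }
    have cont : Continuous L := by
      apply L.continuous_of_seq_closed_graph
      intro u x y hu hLy
      ext b
      apply hjinj
      have h1 : Filter.Tendsto (fun n => j (T (u n) b)) Filter.atTop (nhds (j (y b))) :=
        (j.continuous.tendsto _).comp
          (((ContinuousLinearMap.apply ℂ B b).continuous.tendsto y).comp hLy)
      have h2 : Filter.Tendsto (fun n => u n * j b) Filter.atTop (nhds (x * j b)) :=
        hu.mul tendsto_const_nhds
      rw [show (fun n => j (T (u n) b)) = fun n => u n * j b from funext fun n => hT (u n) b]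
        at h1
      show j (y b) = j (T x b)
      rw [hT]
      exact tendsto_nhds_unique h1 h2
    exact ⟨⟨L, cont⟩, hT⟩
  have hsj : ∀ (c : B) (x : B), s (j c) x = mulB c x := fun c x =>
    hjinj (by rw [hs, hjmul])
  have hsmul2 : ∀ (p q : A) (x : B), s (p * q) x = s p (s q x) := fun p q x =>
    hjinj (by rw [hs, hs, hs, mul_assoc])
  -- the key vanishing
  have key : ∀ a b c u : B, D c (mulB (φ a) (mulB u b)) = 0 := by
    intro a b
    obtain ⟨d, hdapp⟩ : ∃ d : A →L[ℂ] A →L[ℂ] ℂ,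
        ∀ c u, d c u = D (s c a) (s u b) - D a (s (φt c) (s u b)) := by
      refine ⟨D.bilinearComp (s.flip a) (s.flip b) -
        (((ContinuousLinearMap.compL ℂ B B ℂ (D a)).comp s).bilinearComp φt (s.flip b)), ?_⟩
      intro c u
      simp [ContinuousLinearMap.bilinearComp_apply, ContinuousLinearMap.compL_apply]
    have hdj : ∀ (p : B) (u : A), d (j p) u = D p (mulB (φ a) (s u b)) := by
      intro p u
      rw [hdapp, hsj, hext, hsj, hD p a (s u b), hcomm (s u b) (φ p)]
      ring
    have stepA : ∀ p q : B, ∀ u : A,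
        d (j p * j q) u = d (j p) (φt (j q) * u) + d (j q) (u * φt (j p)) := by
      intro p q u
      rw [← hjmul, hdj, hdj, hdj,
        show s (φt (j q) * u) b = mulB (φ q) (s u b) by rw [hsmul2, hext, hsj],
        mul_comm u (φt (j p)),
        show s (φt (j p) * u) b = mulB (φ p) (s u b) by rw [hsmul2, hext, hsj],
        hD p q (mulB (φ a) (s u b)), hswap (φ q) (φ a) (s u b),
        hcomm (mulB (φ a) (s u b)) (φ p), hswap (φ p) (φ a) (s u b)]
    have stepB : ∀ (q : B) (c : A) (u : A),
        d (c * j q) u = d c (φt (j q) * u) + d (j q) (u * φt c) := by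
      intro q
      have hfun : (fun c : A => d (c * j q)) = (fun c : A =>
          (d c).comp (ContinuousLinearMap.mul ℂ A (φt (j q))) +
          (d (j q)).comp ((ContinuousLinearMap.mul ℂ A).flip (φt c))) := by
        apply Continuous.ext_on hjdense
        · exact d.continuous.comp (continuous_id.mul continuous_const)
        · have c1 : Continuous fun c : A =>
              (d c).comp (ContinuousLinearMap.mul ℂ A (φt (j q))) := by
            have := (((ContinuousLinearMap.compL ℂ A A ℂ).flip
              (ContinuousLinearMap.mul ℂ A (φt (j q)))).comp d).continuous
            exact this
          have c2 : Continuous fun c : A =>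
              (d (j q)).comp ((ContinuousLinearMap.mul ℂ A).flip (φt c)) := by
            have := ((ContinuousLinearMap.compL ℂ A A ℂ (d (j q))).comp
              ((ContinuousLinearMap.mul ℂ A).flip.comp φt)).continuous
            exact this
          exact c1.add c2
        · rintro _ ⟨p, rfl⟩
          ext u
          have h := stepA p q u
          rw [mul_comm u (φt (j p))] at h
          simpa [ContinuousLinearMap.mul_apply'] using h
      intro c u
      have := congrFun hfun c
      calc d (c * j q) u = ((d c).comp (ContinuousLinearMap.mul ℂ A (φt (j q))) +
          (d (j q)).comp ((ContinuousLinearMap.mul ℂ A).flip (φt c))) u := by rw [this]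
        _ = d c (φt (j q) * u) + d (j q) (u * φt c) := by
            simp [ContinuousLinearMap.mul_apply', mul_comm u (φt c)]
    have hder : ∀ (c y u : A), d (c * y) u = d c (φt y * u) + d y (u * φt c) := by
      intro c
      have hfun : (fun y : A => d (c * y)) = (fun y : A =>
          (d c).comp (ContinuousLinearMap.mul ℂ A (φt y)) +
          (d y).comp ((ContinuousLinearMap.mul ℂ A).flip (φt c))) := by
        apply Continuous.ext_on hjdense
        · exact d.continuous.comp (continuous_const.mul continuous_id)
        · have c1 : Continuous fun y : A =>
              (d c).comp (ContinuousLinearMap.mul ℂ A (φt y)) := by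
            have := ((ContinuousLinearMap.compL ℂ A A ℂ (d c)).comp
              ((ContinuousLinearMap.mul ℂ A).comp φt)).continuous
            exact this
          have c2 : Continuous fun y : A =>
              (d y).comp ((ContinuousLinearMap.mul ℂ A).flip (φt c)) := by
            have := (((ContinuousLinearMap.compL ℂ A A ℂ).flip
              ((ContinuousLinearMap.mul ℂ A).flip (φt c))).comp d).continuous
            exact this
          exact c1.add c2
        · rintro _ ⟨q, rfl⟩
          ext u
          have h := stepB q c u
          rw [mul_comm u (φt c)] at h
          simpa [ContinuousLinearMap.mul_apply'] using h
      intro y u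
      have := congrFun hfun y
      calc d (c * y) u = ((d c).comp (ContinuousLinearMap.mul ℂ A (φt y)) +
          (d y).comp ((ContinuousLinearMap.mul ℂ A).flip (φt c))) u := by rw [this]
        _ = d c (φt y * u) + d y (u * φt c) := by
            simp [ContinuousLinearMap.mul_apply', mul_comm u (φt c)]
    obtain ⟨ξ, hξ⟩ := hWA d hder
    have hd0 : ∀ (c u : A), d c u = 0 := by
      intro c u
      rw [hξ, mul_comm (φt c) u, sub_self]
    intro c u
    have h0 := hd0 (j c) (j u)
    rw [hdj, hsj] at h0
    exact h0
  haveI := hF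
  have key2 : ∀ a c x : B, D c (mulB (φ a) x) = 0 := by
    intro a c x
    have h1 : Filter.Tendsto (fun α => D c (mulB (φ a) (mulB (e α) x))) F
        (nhds (D c (mulB (φ a) x))) :=
      (((D c).comp (mulB (φ a))).continuous.tendsto x).comp (hae x)
    have h2 : Filter.Tendsto (fun α => D c (mulB (φ a) (mulB (e α) x))) F (nhds 0) := by
      rw [show (fun α => D c (mulB (φ a) (mulB (e α) x))) = fun _ => (0 : ℂ) from
        funext fun α => key a x c (e α)]
      exact tendsto_const_nhds
    exact tendsto_nhds_unique h1 h2
  have key3 : ∀ p q : B, D (mulB p q) = 0 := by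
    intro p q
    ext x
    rw [ContinuousLinearMap.zero_apply, hD p q x, hcomm x (φ p), key2 q p x, key2 p q x,
      add_zero]
  have hD0 : D = 0 := by
    ext b x
    have h1 : Filter.Tendsto (fun α => D (mulB (e α) b) x) F (nhds (D b x)) :=
      ((D.flip x).continuous.tendsto b).comp (hae b)
    have h2 : Filter.Tendsto (fun α => D (mulB (e α) b) x) F (nhds 0) := by
      rw [show (fun α => D (mulB (e α) b) x) = fun _ => (0 : ℂ) from
        funext fun α => by rw [key3 (e α) b, ContinuousLinearMap.zero_apply]]
      exact tendsto_const_nhds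
    rw [ContinuousLinearMap.zero_apply, ContinuousLinearMap.zero_apply]
    exact tendsto_nhds_unique h1 h2
  refine ⟨⟨0, fun a x => ?_⟩, hD0⟩
  rw [hD0]
  simp
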